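/- Let k = 𝔽_q(θ) ⊂ k∞ = 𝔽_q((1/θ)), and for h, l with 0 ≤ h ≤ l−1 define the arithmetic gamma deformation G(q^h/(1−q^l)) := ∏_{i≥1} ∏_{n=0}^{il−1} (1 − t^{q^n}/θ^{q^{il}}) ∈ k∞⟦t⟧ (suitably indexed). Then for every j ≥ 0 there exists b_j ∈ k[t] localized at (t−θ) (i.e. a rational function regular at t=θ) such that ∂_θ^{(j)}(G(q^h/(1−q^l))) = b_j · G(q^h/(1−q^l)), where ∂_θ^{(j)} is the j-th hyperderivative with respect to θ applied coefficientwise. -/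

import Mathlib

/-- Generalized binomial coefficient `C(i, n)` for an integer `i` and natural `n`. -/
def zchoose (i : ℤ) (n : ℕ) : ℤ :=
  if 0 ≤ i then (i.toNat.choose n : ℤ) else (-1) ^ n * (((n : ℤ) - 1 - i).toNat.choose n)

/-- The coefficientwise (product) topology on formal power series. -/
instance powerSeriesPiTopology {K : Type*} [TopologicalSpace K] :
    TopologicalSpace (PowerSeries K) :=
  Pi.topologicalSpace (ι := Unit →₀ ℕ) (Y := fun _ => K)

/-- The element `θ` of `k∞ = 𝔽_q((1/θ))`, realized as the inverse of the variable of
the Laurent series field. -/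
noncomputable def thetaLS (F : Type*) [Field F] : LaurentSeries F :=
  (HahnSeries.single (-1 : ℤ)) (1 : F)

/-- The deformation `G(q^h/(1-q^l)) = ∏_{i≥0} ∏_{n=0}^{il+h-1} (1 - t^{q^n}/θ^{q^{il+h}})`
of the arithmetic gamma value, as a power series in `t` over `k∞`. -/
noncomputable def gammaDeform (F : Type*) [Field F] [Fintype F] (l h : ℕ) :
    PowerSeries (LaurentSeries F) :=
  ∏' i : ℕ, ∏ n ∈ Finset.range (i * l + h),
    (1 - PowerSeries.C (R := LaurentSeries F)
        ((thetaLS F ^ (Fintype.card F) ^ (i * l + h))⁻¹) *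
      (PowerSeries.X : PowerSeries (LaurentSeries F)) ^ (Fintype.card F) ^ n)

/-! ### Auxiliary lemmas on `zchoose` -/

lemma zchoose_zero_right (a : ℤ) : zchoose a 0 = 1 := by
  unfold zchoose; split <;> simp

lemma zchoose_pascal (a : ℤ) (j : ℕ) :
    zchoose (a + 1) (j + 1) = zchoose a (j + 1) + zchoose a j := by
  rcases le_or_gt 0 a with ha | ha
  · have h1 : (0:ℤ) ≤ a + 1 := by omega
    unfold zchoose
    rw [if_pos h1, if_pos ha, if_pos ha]
    have h2 : (a+1).toNat = a.toNat + 1 := by omega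
    rw [h2, Nat.choose_succ_succ]
    push_cast; ring
  · rcases eq_or_lt_of_le (show a ≤ -1 by omega) with he | hlt
    · subst he
      unfold zchoose
      norm_num
      rw [pow_succ]; ring
    · have h1 : ¬ (0:ℤ) ≤ a + 1 := by omega
      have h2 : ¬ (0:ℤ) ≤ a := by omega
      unfold zchoose
      rw [if_neg h1, if_neg h2, if_neg h2]
      push_cast
      have hn : ((j:ℤ) + 1 - 1 - a).toNat = ((j:ℤ) - 1 - a).toNat + 1 := by omega
      have hn2 : ((j:ℤ) + 1 - 1 - (a+1)).toNat = ((j:ℤ) - 1 - a).toNat := by omega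
      rw [hn, hn2, Nat.choose_succ_succ]
      push_cast [pow_succ]
      ring

lemma zchoose_add_pow_char (F : Type*) [Field F] (p : ℕ) [CharP F p] (hp : p.Prime) (T : ℕ) :
    ∀ j : ℕ, j < p ^ T → ∀ a : ℤ, ((zchoose (a + (p:ℤ) ^ T) j : ℤ) : F) = ((zchoose a j : ℤ) : F) := by
  intro j
  induction j with
  | zero => simp [zchoose_zero_right]
  | succ j ih =>
    intro hj a
    have ihj := ih (by omega)
    induction a using Int.induction_on with
    | zero =>
      have h0 : zchoose ((0:ℤ) + (p:ℤ) ^ T) (j+1) = ((p^T).choose (j+1) : ℤ) := by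
        unfold zchoose
        rw [if_pos (by positivity)]
        rw [zero_add, ← Nat.cast_pow, Int.toNat_natCast]
      have hdvd : (p : ℤ) ∣ ((p^T).choose (j+1) : ℤ) := by
        exact_mod_cast hp.dvd_choose_pow (Nat.succ_ne_zero j) (by omega)
      rw [h0]
      have : ((((p^T).choose (j+1) : ℤ)) : F) = 0 := by
        rw [CharP.intCast_eq_zero_iff F p]
        exact hdvd
      rw [this]
      unfold zchoose
      norm_num
    | succ k ihk =>
      have h1 : ((k:ℤ)+1) + (p:ℤ)^T = (k + (p:ℤ)^T) + 1 := by ring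
      rw [h1, zchoose_pascal, zchoose_pascal]
      push_cast
      rw [ihk, ihj (k:ℤ)]
    | pred k ihk =>
      have hpas := zchoose_pascal (-(k:ℤ)-1 + (p:ℤ)^T) j
      have h1 : (-(k:ℤ)-1 + (p:ℤ)^T) + 1 = -(k:ℤ) + (p:ℤ)^T := by ring
      rw [h1] at hpas
      have hpas2 := zchoose_pascal (-(k:ℤ)-1) j
      have h2 : (-(k:ℤ)-1) + 1 = -(k:ℤ) := by ring
      rw [h2] at hpas2
      have e1 : ((zchoose (-(k:ℤ)-1 + (p:ℤ)^T) (j+1) : ℤ) : F)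
          = ((zchoose (-(k:ℤ) + (p:ℤ)^T) (j+1) : ℤ) : F)
            - ((zchoose (-(k:ℤ)-1 + (p:ℤ)^T) j : ℤ) : F) := by
        rw [hpas]; push_cast; ring
      rw [e1, ihk, ihj (-(k:ℤ)-1), hpas2]
      push_cast; ring

lemma zchoose_add_dvd_char (F : Type*) [Field F] (p : ℕ) [CharP F p] (hp : p.Prime) (T : ℕ)
    (j : ℕ) (hj : j < p ^ T) (a b : ℤ) (hb : (p:ℤ)^T ∣ b) :
    ((zchoose (a + b) j : ℤ) : F) = ((zchoose a j : ℤ) : F) := by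
  obtain ⟨k, rfl⟩ := hb
  induction k using Int.induction_on with
  | zero => norm_num
  | succ k ihk =>
    have h1 : a + (p:ℤ)^T * ((k:ℤ)+1) = (a + (p:ℤ)^T * k) + (p:ℤ)^T := by ring
    rw [h1, zchoose_add_pow_char F p hp T j hj, ihk]
  | pred k ihk =>
    have h1 : a + (p:ℤ)^T * (-(k:ℤ)) = (a + (p:ℤ)^T * (-(k:ℤ)-1)) + (p:ℤ)^T := by ring
    rw [h1, zchoose_add_pow_char F p hp T j hj] at ihk
    rw [ihk]

/-! ### Auxiliary lemmas on the hyperderivative -/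

section D
variable {F : Type*} [Field F]
variable (Dθ : ℕ → LaurentSeries F → LaurentSeries F)
variable (hDθ : ∀ (j : ℕ) (f : LaurentSeries F) (m : ℤ),
      (Dθ j f).coeff m = ((zchoose ((j : ℤ) - m) j : ℤ) : F) * f.coeff (m - j))

include hDθ

lemma D_add (j : ℕ) (f g : LaurentSeries F) : Dθ j (f + g) = Dθ j f + Dθ j g := by
  ext m; simp [hDθ, mul_add]

lemma D_zero_fun (f : LaurentSeries F) : Dθ 0 f = f := by
  ext m; rw [hDθ]; simp [zchoose_zero_right]

lemma D_zero (j : ℕ) : Dθ j (0 : LaurentSeries F) = 0 := by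
  ext m; simp [hDθ]

lemma D_one (j : ℕ) (hj : j ≠ 0) : Dθ j (1 : LaurentSeries F) = 0 := by
  ext m
  rw [hDθ]
  rcases eq_or_ne m (j:ℤ) with rfl | hm
  · have h1 : ((j:ℤ) - j) = 0 := by ring
    have h2 : (1 : LaurentSeries F).coeff (0:ℤ) = 1 := by
      rw [HahnSeries.coeff_one]; simp
    rw [h1, h2]
    have : zchoose 0 j = 0 := by
      unfold zchoose
      rw [if_pos le_rfl]
      simp [Nat.choose_eq_zero_of_lt (Nat.pos_of_ne_zero hj)]
    simp [this]
  · have : (1 : LaurentSeries F).coeff (m - j) = 0 := by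
      rw [HahnSeries.coeff_one, if_neg (by omega)]
    rw [this, mul_zero]
    rw [HahnSeries.coeff_zero]

lemma D_single (j : ℕ) (r : ℤ) (c : F) :
    Dθ j (HahnSeries.single r c) = HahnSeries.single (r + j) (((zchoose (-r) j : ℤ) : F) * c) := by
  ext m
  rw [hDθ]
  rcases eq_or_ne m (r + (j:ℤ)) with rfl | hm
  · rw [HahnSeries.coeff_single_same]
    have h1 : r + (j:ℤ) - j = r := by ring
    rw [h1, HahnSeries.coeff_single_same]
    congr 2
    ring
  · rw [HahnSeries.coeff_single_of_ne hm, HahnSeries.coeff_single_of_ne (by omega), mul_zero]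

lemma D_mul_nice (j : ℕ) (x y : LaurentSeries F)
    (hy : ∀ (a b : ℤ), y.coeff b ≠ 0 →
      ((zchoose (-(a+b)) j : ℤ) : F) = ((zchoose (-a) j : ℤ) : F)) :
    Dθ j (x * y) = Dθ j x * y := by
  classical
  set w : LaurentSeries F :=
    { coeff := fun s => ((zchoose (-s) j : ℤ) : F) * x.coeff s,
      isPWO_support' := x.isPWO_support.mono (by
        intro s hs
        simp only [Function.mem_support] at hs ⊢
        intro h0
        apply hs
        rw [h0, mul_zero]) } with hwdef
  have hwsupp : w.support ⊆ x.support := by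
    intro s hs
    simp only [HahnSeries.mem_support, hwdef] at hs ⊢
    intro h0
    apply hs
    show ((zchoose (-s) j : ℤ) : F) * x.coeff s = 0
    rw [h0, mul_zero]
  have hwcoeff : ∀ s, w.coeff s = ((zchoose (-s) j : ℤ) : F) * x.coeff s := fun s => rfl
  have hDx : Dθ j x = (HahnSeries.single (j:ℤ) 1) * w := by
    ext m
    have h2 : ((HahnSeries.single (j:ℤ) 1) * w).coeff m = w.coeff (m - j) := by
      have hm : m = (m - (j:ℤ)) + j := by ring
      conv_lhs => rw [hm]
      rw [HahnSeries.coeff_single_mul_add, one_mul]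
    rw [hDθ, h2, hwcoeff]
    congr 2
    ring
  ext m
  have h2 : ((HahnSeries.single (j:ℤ) 1) * (w * y)).coeff m = (w * y).coeff (m - j) := by
    have hm : m = (m - (j:ℤ)) + j := by ring
    conv_lhs => rw [hm]
    rw [HahnSeries.coeff_single_mul_add, one_mul]
  rw [hDθ, hDx, mul_assoc, h2]
  rw [HahnSeries.coeff_mul_left' x.isPWO_support hwsupp]
  rw [HahnSeries.coeff_mul, Finset.mul_sum]
  apply Finset.sum_congr rfl
  intro ij hij
  rw [Finset.mem_addAntidiagonal] at hij
  obtain ⟨ha, hb, hab⟩ := hij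
  rw [hwcoeff]
  have hyb : y.coeff ij.2 ≠ 0 := hb
  have hz := hy ij.1 ij.2 hyb
  have hjm : (j:ℤ) - m = -(ij.1 + ij.2) := by omega
  rw [hjm, hz]
  ring

lemma D_sum (j : ℕ) {ι : Type*} (t : Finset ι) (g : ι → LaurentSeries F) :
    Dθ j (∑ i ∈ t, g i) = ∑ i ∈ t, Dθ j (g i) := by
  classical
  induction t using Finset.induction with
  | empty => simpa using D_zero Dθ hDθ j
  | insert _ _ hx ih => rw [Finset.sum_insert hx, Finset.sum_insert hx, D_add Dθ hDθ, ih]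

end D

/-! ### Topological lemmas -/

section Top
open scoped Multiplicative
variable {F : Type*} [Field F]

lemma continuous_psCoeff (m : ℕ) :
    Continuous (fun X : PowerSeries (LaurentSeries F) =>
      PowerSeries.coeff (R := LaurentSeries F) m X) := by
  exact continuous_apply (Finsupp.single () m)

lemma isClosed_coeff_zero (s : ℤ) : IsClosed {y : LaurentSeries F | y.coeff s = 0} := by
  letI : UniformSpace F := ⊥
  haveI : DiscreteTopology F := ⟨rfl⟩
  exact (isClosed_discrete ({0} : Set F)).preimage
    (LaurentSeries.uniformContinuous_coeff (K := F) s).continuous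

/-- Niceness predicate at the Laurent-series level: support in multiples of `d`. -/
def NiceL {F : Type*} [Field F] (d : ℤ) (y : LaurentSeries F) : Prop :=
  ∀ s : ℤ, ¬ d ∣ s → y.coeff s = 0

def NiceSet (F : Type*) [Field F] (d : ℤ) : Set (PowerSeries (LaurentSeries F)) :=
  {X | ∀ m : ℕ, NiceL d (PowerSeries.coeff (R := LaurentSeries F) m X)}

lemma isClosed_niceSet (d : ℤ) : IsClosed (NiceSet F d) := by
  have he : NiceSet F d = ⋂ (m : ℕ), ⋂ (s : ℤ),
      {X : PowerSeries (LaurentSeries F) | ¬ d ∣ s →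
        (PowerSeries.coeff (R := LaurentSeries F) m X).coeff s = 0} := by
    ext X
    simp [NiceSet, NiceL, Set.mem_iInter]
  rw [he]
  refine isClosed_iInter fun m => isClosed_iInter fun s => ?_
  by_cases hds : d ∣ s
  · have : {X : PowerSeries (LaurentSeries F) | ¬ d ∣ s →
        (PowerSeries.coeff (R := LaurentSeries F) m X).coeff s = 0} = Set.univ := by
      ext X; simp [hds]
    rw [this]; exact isClosed_univ
  · have : {X : PowerSeries (LaurentSeries F) | ¬ d ∣ s →
        (PowerSeries.coeff (R := LaurentSeries F) m X).coeff s = 0}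
        = (fun X => PowerSeries.coeff (R := LaurentSeries F) m X) ⁻¹' {y | y.coeff s = 0} := by
      ext X; simp [hds]
    rw [this]
    exact (isClosed_coeff_zero s).preimage (continuous_psCoeff m)

lemma niceL_mul {d : ℤ} {y1 y2 : LaurentSeries F} (h1 : NiceL d y1) (h2 : NiceL d y2) :
    NiceL d (y1 * y2) := by
  intro s hs
  by_contra hne
  have hmem : s ∈ (y1 * y2).support := hne
  have := HahnSeries.support_mul_subset hmem
  obtain ⟨a, ha, b, hb, rfl⟩ := Set.mem_add.mp this
  apply hs
  have hda : d ∣ a := by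
    by_contra hda
    exact ha (h1 a hda)
  have hdb : d ∣ b := by
    by_contra hdb
    exact hb (h2 b hdb)
  exact dvd_add hda hdb

lemma niceL_one {d : ℤ} : NiceL (F := F) d 1 := by
  intro s hs
  rw [HahnSeries.coeff_one, if_neg]
  intro h
  exact hs (h ▸ dvd_zero d)

lemma niceL_zero {d : ℤ} : NiceL (F := F) d 0 := fun s _ => HahnSeries.coeff_zero

lemma niceL_sub {d : ℤ} {y1 y2 : LaurentSeries F} (h1 : NiceL d y1) (h2 : NiceL d y2) :
    NiceL d (y1 - y2) := by
  intro s hs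
  rw [HahnSeries.coeff_sub, h1 s hs, h2 s hs, sub_zero]

lemma niceSet_mul {d : ℤ} {X1 X2 : PowerSeries (LaurentSeries F)}
    (h1 : X1 ∈ NiceSet F d) (h2 : X2 ∈ NiceSet F d) : X1 * X2 ∈ NiceSet F d := by
  intro m s hds
  rw [PowerSeries.coeff_mul]
  have hsum : ∀ (t : Finset (ℕ × ℕ)) (g : ℕ × ℕ → LaurentSeries F),
      (∑ pq ∈ t, g pq).coeff s = ∑ pq ∈ t, (g pq).coeff s :=
    fun t g => map_sum (HahnSeries.coeff.addMonoidHom s) g t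
  rw [hsum]
  apply Finset.sum_eq_zero
  intro pq _
  exact niceL_mul (h1 pq.1) (h2 pq.2) s hds

lemma niceSet_one {d : ℤ} : (1 : PowerSeries (LaurentSeries F)) ∈ NiceSet F d := by
  intro m s hds
  rw [PowerSeries.coeff_one]
  by_cases hm : m = 0
  · simp only [hm, if_pos rfl]
    exact niceL_one s hds
  · simp [hm]

lemma niceSet_sub {d : ℤ} {X1 X2 : PowerSeries (LaurentSeries F)}
    (h1 : X1 ∈ NiceSet F d) (h2 : X2 ∈ NiceSet F d) : X1 - X2 ∈ NiceSet F d := by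
  intro m s hds
  rw [map_sub]
  exact niceL_sub (h1 m) (h2 m) s hds

lemma niceSet_CXpow {d : ℤ} {c : LaurentSeries F} (hc : NiceL d c) (e : ℕ) :
    PowerSeries.C (R := LaurentSeries F) c * PowerSeries.X ^ e ∈ NiceSet F d := by
  intro m s hds
  rw [PowerSeries.coeff_C_mul, PowerSeries.coeff_X_pow]
  by_cases hm : m = e
  · rw [if_pos hm, mul_one]
    exact hc s hds
  · rw [if_neg hm, mul_zero]
    exact HahnSeries.coeff_zero

lemma continuous_psMulLeft (A : PowerSeries (LaurentSeries F)) :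
    Continuous fun X : PowerSeries (LaurentSeries F) => A * X := by
  apply continuous_pi
  intro nn
  have hrep : (fun X : PowerSeries (LaurentSeries F) => (A * X) nn)
      = fun X => ∑ pq ∈ Finset.HasAntidiagonal.antidiagonal nn,
          (MvPowerSeries.coeff (R := LaurentSeries F) pq.1 A) *
            (MvPowerSeries.coeff (R := LaurentSeries F) pq.2 X) := by
    funext X
    exact MvPowerSeries.coeff_mul nn A X
  show Continuous fun X : PowerSeries (LaurentSeries F) => (A * X) nn
  rw [hrep]
  apply continuous_finset_sum
  intro pq _
  exact continuous_const.mul (continuous_apply pq.2)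

end Top

/-! ### Polynomial-level lemmas -/

section Psi
variable {F : Type*} [Field F]
open scoped RatFunc

noncomputable def psiLS (F : Type*) [Field F] : Polynomial F →+* LaurentSeries F :=
  (algebraMap (RatFunc F) (LaurentSeries F)).comp (algebraMap (Polynomial F) (RatFunc F))

lemma psiLS_monomial (r : ℕ) (c : F) :
    psiLS F (Polynomial.monomial r c) = HahnSeries.single (r : ℤ) c := by
  rw [← Polynomial.C_mul_X_pow_eq_monomial, map_mul, map_pow]
  have hC : psiLS F (Polynomial.C c) = HahnSeries.single (0:ℤ) c := by
    show algebraMap (RatFunc F) (LaurentSeries F) (algebraMap _ _ (Polynomial.C c)) = _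
    rw [← IsScalarTower.algebraMap_apply (Polynomial F) (RatFunc F) (LaurentSeries F)]
    simp [Polynomial.coe_C, HahnSeries.C_apply]
  have hX : psiLS F Polynomial.X = HahnSeries.single (1:ℤ) 1 := by
    show algebraMap (RatFunc F) (LaurentSeries F) (algebraMap _ _ Polynomial.X) = _
    rw [RatFunc.algebraMap_X]
    exact RatFunc.coe_X
  rw [hC, hX, HahnSeries.single_pow, HahnSeries.single_mul_single]
  norm_num

lemma psiLS_X_pow (Q : ℕ) :
    psiLS F (Polynomial.X ^ Q) = HahnSeries.single (Q : ℤ) 1 := by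
  have : (Polynomial.X : Polynomial F) ^ Q = Polynomial.monomial Q 1 := by
    rw [← Polynomial.C_mul_X_pow_eq_monomial, map_one, one_mul]
  rw [this, psiLS_monomial]

/-- Polynomial-level hyperderivative. -/
noncomputable def dpol (F : Type*) [Field F] (j : ℕ) (g : Polynomial F) : Polynomial F :=
  g.sum fun r c => Polynomial.C (((zchoose (-(r:ℤ)) j : ℤ) : F) * c) * Polynomial.X ^ (r + j)

lemma dpol_zero (j : ℕ) : dpol F j 0 = 0 := by
  unfold dpol; simp [Polynomial.sum_zero_index]

lemma dpol_monomial (j : ℕ) (r : ℕ) (c : F) :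
    dpol F j (Polynomial.monomial r c)
      = Polynomial.monomial (r + j) (((zchoose (-(r:ℤ)) j : ℤ) : F) * c) := by
  unfold dpol
  rw [Polynomial.sum_monomial_index, Polynomial.C_mul_X_pow_eq_monomial]
  simp

lemma dpol_add (j : ℕ) (g1 g2 : Polynomial F) :
    dpol F j (g1 + g2) = dpol F j g1 + dpol F j g2 := by
  unfold dpol
  rw [Polynomial.sum_add_index]
  · intro r; simp
  · intro r c1 c2; rw [mul_add, map_add, add_mul]

lemma D_psi (Dθ : ℕ → LaurentSeries F → LaurentSeries F)
    (hDθ : ∀ (j : ℕ) (f : LaurentSeries F) (m : ℤ),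
      (Dθ j f).coeff m = ((zchoose ((j : ℤ) - m) j : ℤ) : F) * f.coeff (m - j))
    (j : ℕ) (g : Polynomial F) :
    Dθ j (psiLS F g) = psiLS F (dpol F j g) := by
  induction g using Polynomial.induction_on' with
  | add f g hf hg => rw [map_add, D_add Dθ hDθ, hf, hg, dpol_add, map_add]
  | monomial r c =>
    rw [psiLS_monomial, dpol_monomial, psiLS_monomial, D_single Dθ hDθ]
    push_cast
    rfl

/-- Coefficientwise `dpol` on polynomials over `F[x]`. -/
noncomputable def dpolT (F : Type*) [Field F] (j : ℕ) (P : Polynomial (Polynomial F)) :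
    Polynomial (Polynomial F) :=
  ∑ m ∈ P.support, Polynomial.C (dpol F j (P.coeff m)) * Polynomial.X ^ m

lemma dpolT_coeff (j : ℕ) (P : Polynomial (Polynomial F)) (m : ℕ) :
    (dpolT F j P).coeff m = dpol F j (P.coeff m) := by
  unfold dpolT
  rw [Polynomial.finset_sum_coeff]
  by_cases hm : m ∈ P.support
  · rw [Finset.sum_eq_single m]
    · rw [Polynomial.coeff_C_mul, Polynomial.coeff_X_pow, if_pos rfl, mul_one]
    · intro b _ hbm
      rw [Polynomial.coeff_C_mul, Polynomial.coeff_X_pow, if_neg (fun hh => hbm hh.symm), mul_zero]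
    · intro hnotm; exact absurd hm hnotm
  · have h0 : P.coeff m = 0 := Polynomial.notMem_support_iff.mp hm
    rw [h0, dpol_zero]
    apply Finset.sum_eq_zero
    intro b hb
    rw [Polynomial.coeff_C_mul, Polynomial.coeff_X_pow, if_neg, mul_zero]
    intro hh
    exact hm (hh ▸ hb)

lemma thetaLS_pow (E : ℕ) : thetaLS F ^ E = HahnSeries.single (-(E:ℤ)) (1:F) := by
  rw [thetaLS, HahnSeries.single_pow, one_pow, nsmul_eq_mul, mul_neg_one]

lemma thetaLS_pow_inv (E : ℕ) : (thetaLS F ^ E)⁻¹ = HahnSeries.single ((E:ℤ)) (1:F) := by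
  rw [thetaLS_pow]
  apply inv_eq_of_mul_eq_one_right
  rw [HahnSeries.single_mul_single, neg_add_cancel, one_mul, HahnSeries.single_zero_one]

end Psi

/-- For each `j ≥ 0` there is `b_j ∈ k[t]_{(t-θ)}` (a rational function `P/Q` with
`Q(θ) ≠ 0`, `k = 𝔽_q(θ)`) such that `∂_θ^{(j)} G(q^h/(1-q^l)) = b_j · G(q^h/(1-q^l))`,
where `∂_θ^{(j)}` is the `j`-th hyperderivative in `θ` applied coefficientwise. -/
theorem gammaDeform_theta_hyperderiv {F : Type*} [Field F] [Fintype F]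
    (l h : ℕ) (hl : 0 < l) (hh : h ≤ l - 1)
    (Dθ : ℕ → LaurentSeries F → LaurentSeries F)
    (hDθ : ∀ (j : ℕ) (f : LaurentSeries F) (m : ℤ),
      (Dθ j f).coeff m = ((zchoose ((j : ℤ) - m) j : ℤ) : F) * f.coeff (m - j))
    (j : ℕ) :
    ∃ P Q : Polynomial (RatFunc F),
      Q ≠ 0 ∧
      Polynomial.eval (thetaLS F)
        (Q.map (@algebraMap (RatFunc F) (LaurentSeries F) _ _ (RatFunc.liftAlgebra F (LaurentSeries F)))) ≠ 0 ∧
      ((Q.map (@algebraMap (RatFunc F) (LaurentSeries F) _ _ (RatFunc.liftAlgebra F (LaurentSeries F))) : Polynomial (LaurentSeries F)) :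
          PowerSeries (LaurentSeries F)) *
        (PowerSeries.mk fun m => Dθ j (PowerSeries.coeff (R := LaurentSeries F) m
            (gammaDeform F l h))) =
      ((P.map (@algebraMap (RatFunc F) (LaurentSeries F) _ _ (RatFunc.liftAlgebra F (LaurentSeries F))) : Polynomial (LaurentSeries F)) :
          PowerSeries (LaurentSeries F)) * gammaDeform F l h := by
  classical
  by_cases hj0 : j = 0
  · subst hj0
    refine ⟨1, 1, one_ne_zero, ?_, ?_⟩
    · rw [Polynomial.map_one, Polynomial.eval_one]; exact one_ne_zero
    · have hid : (PowerSeries.mk fun m => Dθ 0 (PowerSeries.coeff (R := LaurentSeries F) m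
          (gammaDeform F l h))) = gammaDeform F l h := by
        refine PowerSeries.ext fun m => ?_
        rw [PowerSeries.coeff_mk, D_zero_fun Dθ hDθ]
      rw [hid, Polynomial.map_one, Polynomial.coe_one]
  set f : ℕ → PowerSeries (LaurentSeries F) := fun i =>
    ∏ n ∈ Finset.range (i * l + h),
      (1 - PowerSeries.C (R := LaurentSeries F)
          ((thetaLS F ^ (Fintype.card F) ^ (i * l + h))⁻¹) *
        (PowerSeries.X : PowerSeries (LaurentSeries F)) ^ (Fintype.card F) ^ n) with hfdef
  have hGf : gammaDeform F l h = ∏' i, f i := by simp only [hfdef]; rfl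
  by_cases hMul : Multipliable f
  swap
  · -- not multipliable: the product is 1
    have hG1 : gammaDeform F l h = 1 := by
      rw [hGf]; exact tprod_eq_one_of_not_multipliable hMul
    refine ⟨0, 1, one_ne_zero, ?_, ?_⟩
    · rw [Polynomial.map_one, Polynomial.eval_one]; exact one_ne_zero
    · rw [hG1, Polynomial.map_one, Polynomial.coe_one, Polynomial.map_zero,
        Polynomial.coe_zero, zero_mul, one_mul]
      refine PowerSeries.ext fun m => ?_
      rw [PowerSeries.coeff_mk, map_zero, PowerSeries.coeff_one]
      by_cases hm : m = 0
      · rw [if_pos hm, D_one Dθ hDθ _ hj0]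
      · rw [if_neg hm, D_zero Dθ hDθ]
  · -- main case
    obtain ⟨e, hp, hcard⟩ := FiniteField.card F (ringChar F)
    have hp2 : 1 < Fintype.card F := Fintype.one_lt_card
    set N := j + 1 with hN
    set M := N * l + h with hM
    set T : ℕ := (e : ℕ) * M with hT
    have hqM : Fintype.card F ^ M = ringChar F ^ T := by
      rw [hcard, ← pow_mul]
    have hjT : j < ringChar F ^ T := by
      have h0 : j < 2 ^ j := Nat.lt_two_pow_self
      have hjM : j ≤ M := by
        have h1 : N * 1 ≤ N * l := Nat.mul_le_mul_left N hl
        omega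
      have h1 : (2:ℕ) ^ j ≤ 2 ^ M := Nat.pow_le_pow_right (by norm_num) hjM
      have h2 : (2:ℕ) ^ M ≤ Fintype.card F ^ M := Nat.pow_le_pow_left hp2 M
      rw [← hqM]
      omega
    set d : ℤ := (Fintype.card F : ℤ) ^ M with hd
    have hdp : d = (ringChar F : ℤ) ^ T := by
      rw [hd]
      exact_mod_cast congrArg (fun x : ℕ => (x : ℤ)) hqM
    have hcong : ∀ a b : ℤ, d ∣ b →
        ((zchoose (-(a+b)) j : ℤ) : F) = ((zchoose (-a) j : ℤ) : F) := by
      intro a b hb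
      have hrw : -(a+b) = -a + (-b) := by ring
      rw [hrw]
      refine zchoose_add_dvd_char F (ringChar F) hp T j hjT (-a) (-b) ?_
      rw [← hdp]
      exact dvd_neg.mpr hb
    set A : PowerSeries (LaurentSeries F) := ∏ i ∈ Finset.range N, f i with hA
    have hfi_eq : ∀ i : ℕ, f i = ∏ n ∈ Finset.range (i * l + h),
        (1 - PowerSeries.C (R := LaurentSeries F)
            (HahnSeries.single ((Fintype.card F ^ (i * l + h) : ℕ) : ℤ) (1:F)) *
          (PowerSeries.X : PowerSeries (LaurentSeries F)) ^ (Fintype.card F) ^ n) := by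
      intro i
      simp only [hfdef]
      refine Finset.prod_congr rfl fun n _ => ?_
      rw [thetaLS_pow_inv]
    have hfi_nice : ∀ i : ℕ, N ≤ i → f i ∈ NiceSet F d := by
      intro i hi
      rw [hfi_eq i]
      refine Finset.prod_induction _ _ (fun a b ha hb => niceSet_mul ha hb) niceSet_one ?_
      intro n _
      refine niceSet_sub niceSet_one (niceSet_CXpow ?_ _)
      intro s hs
      rw [HahnSeries.coeff_single, if_neg]
      intro hsQ
      apply hs
      rw [hsQ, hd]
      have hMle : M ≤ i * l + h := by
        have := Nat.mul_le_mul_right l hi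
        omega
      exact_mod_cast Int.natCast_dvd_natCast.mpr (pow_dvd_pow (Fintype.card F) hMle)
    have hA0 : PowerSeries.constantCoeff (R := LaurentSeries F) A ≠ 0 := by
      have hA1 : PowerSeries.constantCoeff (R := LaurentSeries F) A = 1 := by
        rw [hA, map_prod]
        refine Finset.prod_eq_one fun i _ => ?_
        simp only [hfdef]
        rw [map_prod]
        refine Finset.prod_eq_one fun n _ => ?_
        rw [map_sub, map_one, map_mul, map_pow, PowerSeries.constantCoeff_X,
          zero_pow (pow_ne_zero n Fintype.card_ne_zero), mul_zero, sub_zero]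
      rw [hA1]; exact one_ne_zero
    set R : PowerSeries (LaurentSeries F) := A⁻¹ * gammaDeform F l h with hR
    have hARG : gammaDeform F l h = A * R := by
      rw [hR, ← mul_assoc, PowerSeries.mul_inv_cancel A hA0, one_mul]
    have hRnice : R ∈ NiceSet F d := by
      have htend : Filter.Tendsto (fun S : Finset ℕ => A⁻¹ * ∏ i ∈ S, f i)
          Filter.atTop (nhds R) := by
        have h1 : Filter.Tendsto (fun S : Finset ℕ => ∏ i ∈ S, f i) Filter.atTop
            (nhds (gammaDeform F l h)) := by
          rw [hGf]; exact hMul.hasProd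
        exact ((continuous_psMulLeft A⁻¹).tendsto _).comp h1
      refine (isClosed_niceSet d).mem_of_tendsto htend ?_
      filter_upwards [Filter.eventually_ge_atTop (Finset.range N)] with S hS
      have hsplit : (∏ i ∈ S \ Finset.range N, f i) * ∏ i ∈ Finset.range N, f i
          = ∏ i ∈ S, f i := Finset.prod_sdiff hS
      have hred : A⁻¹ * ∏ i ∈ S, f i = ∏ i ∈ S \ Finset.range N, f i := by
        rw [← hsplit, ← hA]
        calc A⁻¹ * ((∏ i ∈ S \ Finset.range N, f i) * A)
            = (∏ i ∈ S \ Finset.range N, f i) * (A * A⁻¹) := by ring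
          _ = ∏ i ∈ S \ Finset.range N, f i := by
              rw [PowerSeries.mul_inv_cancel A hA0, mul_one]
      rw [hred]
      refine Finset.prod_induction _ _ (fun a b ha hb => niceSet_mul ha hb) niceSet_one ?_
      intro i hiS
      apply hfi_nice
      rcases Finset.mem_sdiff.mp hiS with ⟨_, hnot⟩
      rw [Finset.mem_range] at hnot
      omega
    set ApolyX : Polynomial (Polynomial F) := ∏ i ∈ Finset.range N,
      ∏ n ∈ Finset.range (i * l + h),
        (1 - Polynomial.C (Polynomial.X ^ (Fintype.card F ^ (i * l + h))) *
          Polynomial.X ^ (Fintype.card F ^ n)) with hApolyX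
    have hmapmap : ∀ P : Polynomial (Polynomial F),
        (P.map (algebraMap (Polynomial F) (RatFunc F))).map (@algebraMap (RatFunc F) (LaurentSeries F) _ _ (RatFunc.liftAlgebra F (LaurentSeries F)))
          = P.map (psiLS F) := fun P => by
      rw [Polynomial.map_map]; rfl
    have hApsi : ApolyX.map (psiLS F) = ∏ i ∈ Finset.range N,
        ∏ n ∈ Finset.range (i * l + h),
          (1 - Polynomial.C (HahnSeries.single ((Fintype.card F ^ (i * l + h) : ℕ) : ℤ) (1:F)) *
            Polynomial.X ^ (Fintype.card F ^ n)) := by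
      rw [hApolyX, ← Polynomial.coe_mapRingHom, map_prod]
      refine Finset.prod_congr rfl fun i _ => ?_
      rw [map_prod]
      refine Finset.prod_congr rfl fun n _ => ?_
      rw [Polynomial.coe_mapRingHom]
      rw [Polynomial.map_sub, Polynomial.map_one, Polynomial.map_mul, Polynomial.map_C,
        Polynomial.map_pow, Polynomial.map_X, psiLS_X_pow]
    have heval : Polynomial.eval (thetaLS F)
        ((ApolyX.map (algebraMap (Polynomial F) (RatFunc F))).map
          (@algebraMap (RatFunc F) (LaurentSeries F) _ _ (RatFunc.liftAlgebra F (LaurentSeries F)))) ≠ 0 := by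
      rw [hmapmap, hApsi, Polynomial.eval_prod]
      refine Finset.prod_ne_zero_iff.mpr fun i _ => ?_
      rw [Polynomial.eval_prod]
      refine Finset.prod_ne_zero_iff.mpr fun n hn => ?_
      rw [Polynomial.eval_sub, Polynomial.eval_one, Polynomial.eval_mul,
        Polynomial.eval_C, Polynomial.eval_pow, Polynomial.eval_X, thetaLS_pow,
        HahnSeries.single_mul_single, one_mul]
      have hlt : Fintype.card F ^ n < Fintype.card F ^ (i * l + h) :=
        Nat.pow_lt_pow_right hp2 (Finset.mem_range.mp hn)
      have hEne : ((Fintype.card F ^ (i * l + h) : ℕ) : ℤ)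
          + -((Fintype.card F ^ n : ℕ) : ℤ) ≠ 0 := by
        omega
      intro h0
      have hco := congrArg (fun z : LaurentSeries F => z.coeff
        (((Fintype.card F ^ (i * l + h) : ℕ) : ℤ) + -((Fintype.card F ^ n : ℕ) : ℤ))) h0
      simp only [HahnSeries.coeff_sub, HahnSeries.coeff_one, if_neg hEne,
        HahnSeries.coeff_single_same, HahnSeries.coeff_zero] at hco
      norm_num at hco
    refine ⟨(dpolT F j ApolyX).map (algebraMap (Polynomial F) (RatFunc F)),
      ApolyX.map (algebraMap (Polynomial F) (RatFunc F)), ?_, heval, ?_⟩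
    · intro h0
      apply heval
      rw [h0, Polynomial.map_zero, Polynomial.eval_zero]
    · -- the main equation
      have hAcoe : ((ApolyX.map (psiLS F) : Polynomial (LaurentSeries F)) :
          PowerSeries (LaurentSeries F)) = A := by
        rw [hApsi, hA, ← Polynomial.coeToPowerSeries.ringHom_apply, map_prod]
        refine Finset.prod_congr rfl fun i _ => ?_
        rw [map_prod, hfi_eq i]
        refine Finset.prod_congr rfl fun n _ => ?_
        rw [Polynomial.coeToPowerSeries.ringHom_apply, Polynomial.coe_sub, Polynomial.coe_one,
          Polynomial.coe_mul, Polynomial.coe_pow, Polynomial.coe_C, Polynomial.coe_X]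
      have hAcoeff : ∀ m : ℕ, PowerSeries.coeff (R := LaurentSeries F) m A
          = psiLS F (ApolyX.coeff m) := by
        intro m
        rw [← hAcoe, Polynomial.coeff_coe, Polynomial.coeff_map]
      have hPcoe : (((dpolT F j ApolyX).map (psiLS F) : Polynomial (LaurentSeries F)) :
          PowerSeries (LaurentSeries F))
          = PowerSeries.mk fun m => Dθ j (PowerSeries.coeff (R := LaurentSeries F) m A) := by
        refine PowerSeries.ext fun m => ?_
        rw [PowerSeries.coeff_mk, Polynomial.coeff_coe, Polynomial.coeff_map, dpolT_coeff,
          hAcoeff m, D_psi Dθ hDθ]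
      have hDmul : (PowerSeries.mk fun m => Dθ j
          (PowerSeries.coeff (R := LaurentSeries F) m (A * R)))
          = (PowerSeries.mk fun m => Dθ j (PowerSeries.coeff (R := LaurentSeries F) m A)) * R := by
        refine PowerSeries.ext fun m => ?_
        rw [PowerSeries.coeff_mk, PowerSeries.coeff_mul, PowerSeries.coeff_mul]
        have hDsum : Dθ j (∑ pq ∈ Finset.HasAntidiagonal.antidiagonal m,
            PowerSeries.coeff (R := LaurentSeries F) pq.1 A *
              PowerSeries.coeff (R := LaurentSeries F) pq.2 R)
            = ∑ pq ∈ Finset.HasAntidiagonal.antidiagonal m, Dθ j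
              (PowerSeries.coeff (R := LaurentSeries F) pq.1 A *
                PowerSeries.coeff (R := LaurentSeries F) pq.2 R) :=
          D_sum Dθ hDθ j (Finset.HasAntidiagonal.antidiagonal m) _
        rw [hDsum]
        refine Finset.sum_congr rfl fun pq _ => ?_
        rw [PowerSeries.coeff_mk]
        refine D_mul_nice Dθ hDθ j _ _ fun a b hb => ?_
        refine hcong a b ?_
        by_contra hdb
        exact hb (hRnice pq.2 b hdb)
      rw [hmapmap, hmapmap, hAcoe, hPcoe, hARG, hDmul]
      ring
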